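/- For distinct positive reals x, y, z and real s > 0, the sum 1/(x^s (x−y)(x−z)) + 1/(y^s (y−z)(y−x)) + 1/(z^s (z−x)(z−y)) is strictly positive. -/
import Mathlib

open Real

private lemma key_slope (s : ℝ) {a b : ℝ} (ha : 0 < a) (hab : a < b) :
    ∃ c ∈ Set.Ioo a b, b ^ s - a ^ s = s * c ^ (s - 1) * (b - a) := by
  have hderivAt : ∀ t ∈ Set.Icc a b, HasDerivAt (fun u : ℝ => u ^ s) (s * t ^ (s - 1)) t := by
    intro t ht
    exact Real.hasDerivAt_rpow_const (Or.inl (ne_of_gt (lt_of_lt_of_le ha ht.1)))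
  obtain ⟨c, hc, hderiv⟩ := exists_hasDerivAt_eq_slope (fun u : ℝ => u ^ s)
    (fun t => s * t ^ (s - 1)) hab
    (fun t ht => (hderivAt t ht).continuousAt.continuousWithinAt)
    (fun t ht => hderivAt t (Set.mem_Icc_of_Ioo ht))
  refine ⟨c, hc, ?_⟩
  have hba : b - a ≠ 0 := by linarith [hab]
  rw [eq_div_iff hba] at hderiv
  linarith [hderiv]

private lemma key_ordered (s : ℝ) (hs : 0 < s) {x y z : ℝ} (hz : 0 < z) (hzy : z < y)
    (hyx : y < x) :
    0 < 1 / (x ^ s * (x - y) * (x - z)) + 1 / (y ^ s * (y - z) * (y - x)) +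
        1 / (z ^ s * (z - x) * (z - y)) := by
  have hy : 0 < y := hz.trans hzy
  have hx : 0 < x := hy.trans hyx
  obtain ⟨c, ⟨hc1, hc2⟩, hcs⟩ := key_slope s hz hzy
  obtain ⟨d, ⟨hd1, hd2⟩, hds⟩ := key_slope s hy hyx
  have hc0 : 0 < c := hz.trans hc1
  have hd0 : 0 < d := hy.trans hd1
  have hK : z ^ s * d ^ (s - 1) < x ^ s * c ^ (s - 1) := by
    rcases le_total s 1 with h1 | h1
    · have e1 : z ^ s < x ^ s := Real.rpow_lt_rpow hz.le (by linarith) hs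
      have e2 : d ^ (s - 1) ≤ c ^ (s - 1) :=
        Real.rpow_le_rpow_of_nonpos hc0 (by linarith) (by linarith)
      calc z ^ s * d ^ (s - 1) < x ^ s * d ^ (s - 1) :=
            mul_lt_mul_of_pos_right e1 (Real.rpow_pos_of_pos hd0 _)
        _ ≤ x ^ s * c ^ (s - 1) :=
            mul_le_mul_of_nonneg_left e2 (Real.rpow_pos_of_pos hx _).le
    · have e1 : d ^ s < x ^ s := Real.rpow_lt_rpow hd0.le hd2 hs
      have e2 : z ^ (s - 1) ≤ c ^ (s - 1) := Real.rpow_le_rpow hz.le hc1.le (by linarith)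
      have hzs : z ^ s = z ^ (s - 1) * z := by
        rw [← Real.rpow_add_one (ne_of_gt hz)]; ring_nf
      have hdd : d ^ s = d ^ (s - 1) * d := by
        rw [← Real.rpow_add_one (ne_of_gt hd0)]; ring_nf
      have e3 : z ^ s * d ^ (s - 1) < d ^ s * z ^ (s - 1) := by
        rw [hzs, hdd]
        have p1 := Real.rpow_pos_of_pos hz (s - 1)
        have p2 := Real.rpow_pos_of_pos hd0 (s - 1)
        nlinarith [mul_pos p1 p2]
      calc z ^ s * d ^ (s - 1) < d ^ s * z ^ (s - 1) := e3
        _ < x ^ s * z ^ (s - 1) :=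
            mul_lt_mul_of_pos_right e1 (Real.rpow_pos_of_pos hz _)
        _ ≤ x ^ s * c ^ (s - 1) :=
            mul_le_mul_of_nonneg_left e2 (Real.rpow_pos_of_pos hx _).le
  have hN : 0 < (x - y) * x ^ s * (y ^ s - z ^ s) - (y - z) * z ^ s * (x ^ s - y ^ s) := by
    rw [hcs, hds]
    have : (x - y) * x ^ s * (s * c ^ (s - 1) * (y - z)) -
        (y - z) * z ^ s * (s * d ^ (s - 1) * (x - y)) =
        (x - y) * (y - z) * s * (x ^ s * c ^ (s - 1) - z ^ s * d ^ (s - 1)) := by ring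
    rw [this]
    have h1 : 0 < x - y := by linarith
    have h2 : 0 < y - z := by linarith
    have hK' : 0 < x ^ s * c ^ (s - 1) - z ^ s * d ^ (s - 1) := sub_pos.mpr hK
    exact mul_pos (mul_pos (mul_pos h1 h2) hs) hK'
  have hxs := Real.rpow_pos_of_pos hx s
  have hys := Real.rpow_pos_of_pos hy s
  have hzs := Real.rpow_pos_of_pos hz s
  have hD : 0 < x ^ s * y ^ s * z ^ s * (x - y) * (y - z) * (x - z) := by
    have h1 : 0 < x - y := by linarith
    have h2 : 0 < y - z := by linarith
    have h3 : 0 < x - z := by linarith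
    positivity
  have hEq : 1 / (x ^ s * (x - y) * (x - z)) + 1 / (y ^ s * (y - z) * (y - x)) +
      1 / (z ^ s * (z - x) * (z - y)) =
      ((x - y) * x ^ s * (y ^ s - z ^ s) - (y - z) * z ^ s * (x ^ s - y ^ s)) /
        (x ^ s * y ^ s * z ^ s * (x - y) * (y - z) * (x - z)) := by
    have hxs' : x ^ s ≠ 0 := ne_of_gt hxs
    have hys' : y ^ s ≠ 0 := ne_of_gt hys
    have hzs' : z ^ s ≠ 0 := ne_of_gt hzs
    have n1 : x - y ≠ 0 := by linarith
    have n2 : y - z ≠ 0 := by linarith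
    have n3 : x - z ≠ 0 := by linarith
    have n4 : y - x ≠ 0 := by linarith
    have n5 : z - y ≠ 0 := by linarith
    have n6 : z - x ≠ 0 := by linarith
    field_simp
    ring
  rw [hEq]
  exact div_pos hN hD


private lemma schur_expr_swap12 (s x y z : ℝ) (hx : x ^ s ≠ 0) (hy : y ^ s ≠ 0)
    (hz : z ^ s ≠ 0) (nxy : x - y ≠ 0) (nyz : y - z ≠ 0) (nxz : x - z ≠ 0) :
    1 / (x ^ s * (x - y) * (x - z)) + 1 / (y ^ s * (y - z) * (y - x)) +
        1 / (z ^ s * (z - x) * (z - y)) =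
    1 / (y ^ s * (y - x) * (y - z)) + 1 / (x ^ s * (x - z) * (x - y)) +
        1 / (z ^ s * (z - y) * (z - x)) := by
  have n4 : y - x ≠ 0 := fun h => nxy (by linarith [sub_eq_zero.mp h])
  have n5 : z - y ≠ 0 := fun h => nyz (by linarith [sub_eq_zero.mp h])
  have n6 : z - x ≠ 0 := fun h => nxz (by linarith [sub_eq_zero.mp h])
  field_simp
  ring

private lemma schur_expr_swap23 (s x y z : ℝ) (hx : x ^ s ≠ 0) (hy : y ^ s ≠ 0)
    (hz : z ^ s ≠ 0) (nxy : x - y ≠ 0) (nyz : y - z ≠ 0) (nxz : x - z ≠ 0) :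
    1 / (x ^ s * (x - y) * (x - z)) + 1 / (y ^ s * (y - z) * (y - x)) +
        1 / (z ^ s * (z - x) * (z - y)) =
    1 / (x ^ s * (x - z) * (x - y)) + 1 / (z ^ s * (z - y) * (z - x)) +
        1 / (y ^ s * (y - x) * (y - z)) := by
  have n4 : y - x ≠ 0 := fun h => nxy (by linarith [sub_eq_zero.mp h])
  have n5 : z - y ≠ 0 := fun h => nyz (by linarith [sub_eq_zero.mp h])
  have n6 : z - x ≠ 0 := fun h => nxz (by linarith [sub_eq_zero.mp h])
  field_simp
  ring

theorem reciprocal_schur_pos (x y z : ℝ) (hx : 0 < x) (hy : 0 < y) (hz : 0 < z)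
    (hxy : x ≠ y) (hyz : y ≠ z) (hxz : x ≠ z) (s : ℝ) (hs : 0 < s) :
    0 < 1 / (x ^ s * (x - y) * (x - z)) + 1 / (y ^ s * (y - z) * (y - x)) +
        1 / (z ^ s * (z - x) * (z - y)) := by
  have hxs' : x ^ s ≠ 0 := ne_of_gt (Real.rpow_pos_of_pos hx s)
  have hys' : y ^ s ≠ 0 := ne_of_gt (Real.rpow_pos_of_pos hy s)
  have hzs' : z ^ s ≠ 0 := ne_of_gt (Real.rpow_pos_of_pos hz s)
  have nxy : x - y ≠ 0 := sub_ne_zero.mpr hxy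
  have nyx : y - x ≠ 0 := sub_ne_zero.mpr hxy.symm
  have nyz : y - z ≠ 0 := sub_ne_zero.mpr hyz
  have nzy : z - y ≠ 0 := sub_ne_zero.mpr hyz.symm
  have nxz : x - z ≠ 0 := sub_ne_zero.mpr hxz
  have nzx : z - x ≠ 0 := sub_ne_zero.mpr hxz.symm
  rcases hxy.lt_or_gt with h1 | h1 <;> rcases hyz.lt_or_gt with h2 | h2 <;>
    rcases hxz.lt_or_gt with h3 | h3
  · -- x < y < z : descending (z, y, x)
    rw [schur_expr_swap23 s x y z hxs' hys' hzs' nxy nyz nxz,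
      schur_expr_swap12 s x z y hxs' hzs' hys' nxz nzy nxy,
      schur_expr_swap23 s z x y hzs' hxs' hys' nzx nxy nzy]
    exact key_ordered s hs hx h1 h2
  · exact absurd (h1.trans h2) h3.asymm
  · -- x < z < y : descending (y, z, x)
    rw [schur_expr_swap12 s x y z hxs' hys' hzs' nxy nyz nxz,
      schur_expr_swap23 s y x z hys' hxs' hzs' nyx nxz nyz]
    exact key_ordered s hs hx h3 h2
  · -- z < x < y : descending (y, x, z)
    rw [schur_expr_swap12 s x y z hxs' hys' hzs' nxy nyz nxz]
    exact key_ordered s hs hz h3 h1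
  · -- y < x < z : descending (z, x, y)
    rw [schur_expr_swap23 s x y z hxs' hys' hzs' nxy nyz nxz,
      schur_expr_swap12 s x z y hxs' hzs' hys' nxz nzy nxy]
    exact key_ordered s hs hy h1 h3
  · -- y < z < x : descending (x, z, y)
    rw [schur_expr_swap23 s x y z hxs' hys' hzs' nxy nyz nxz]
    exact key_ordered s hs hy h2 h3
  · exact absurd (h3.trans h2) h1.asymm
  · -- z < y < x
    exact key_ordered s hs hz h2 h1
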